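/- Let S' ⊆ F_q^n be a weakly self-dual [n,K] linear code (S'^⊥ ⊆ S'), let H ∈ F_q^{(n-K)×n} be a parity-check matrix of S', and let V ⊆ F_q^{2n} be the row span of diag(H, H). Let J = [[0, -I_n],[I_n, 0]] ∈ F_q^{2n×2n}. Then the symplectic dual of V, namely V^{⊥_J} = {w ∈ F_q^{2n} : v J w^T = 0 for all v ∈ V}, equals the Cartesian product code S' × S' = {(s, s') ∈ F_q^{2n} : s, s' ∈ S'}. -/

import Mathlib

open Polynomial Matrix

/-- The generalized Reed–Solomon code `GRS_k(α, v)` of length `n` and dimension `k`,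
with code locators `α` and column multipliers `v`: the set of words
`(v 1 * f(α 1), …, v n * f(α n))` for polynomials `f` of degree `< k`. -/
noncomputable def GRS {F : Type} [Field F] {n : ℕ} (k : ℕ) (α v : Fin n → F) :
    Submodule F (Fin n → F) :=
  Submodule.map (LinearMap.pi fun i => v i • Polynomial.leval (α i))
    (Polynomial.degreeLT F k)

/-- The dual code with respect to the standard bilinear form `(c, x) ↦ ∑ i, c i * x i`. -/
def dualCode {F : Type} [Field F] {ι : Type} [Fintype ι] (C : Submodule F (ι → F)) :
    Submodule F (ι → F) where
  carrier := {x | ∀ c ∈ C, ∑ i, c i * x i = 0}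
  add_mem' := by
    intro a b ha hb c hc
    simp only [Pi.add_apply, mul_add, Finset.sum_add_distrib, ha c hc, hb c hc, add_zero]
  zero_mem' := by intro c hc; simp
  smul_mem' := by
    intro r x hx c hc
    simp only [Pi.smul_apply, smul_eq_mul, mul_left_comm, ← Finset.mul_sum, hx c hc, mul_zero]

/-- The star-product (componentwise/Schur product) code `C ⋆ D`:
the span of all componentwise products of a codeword of `C` with a codeword of `D`. -/
def starProd {F : Type} [Field F] {ι : Type} (C D : Submodule F (ι → F)) :
    Submodule F (ι → F) :=
  Submodule.span F {x | ∃ c ∈ C, ∃ d ∈ D, x = c * d}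

/-- The Cartesian product code `C × C ⊆ F^{2n}`, realized on the index type `Fin n ⊕ Fin n`. -/
def cartProd {F : Type} [Field F] {n : ℕ} (C : Submodule F (Fin n → F)) :
    Submodule F (Fin n ⊕ Fin n → F) where
  carrier := {x | (fun i => x (Sum.inl i)) ∈ C ∧ (fun i => x (Sum.inr i)) ∈ C}
  add_mem' := fun ha hb => ⟨C.add_mem ha.1 hb.1, C.add_mem ha.2 hb.2⟩
  zero_mem' := ⟨C.zero_mem, C.zero_mem⟩
  smul_mem' := fun r x hx => ⟨C.smul_mem r hx.1, C.smul_mem r hx.2⟩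

def dotForm (F : Type) [Field F] (ι : Type) [Fintype ι] : LinearMap.BilinForm F (ι → F) :=
  LinearMap.mk₂ F (fun x y => ∑ i, x i * y i)
    (fun x x' y => by simp [add_mul, Finset.sum_add_distrib])
    (fun r x y => by simp [Finset.mul_sum, mul_assoc])
    (fun x y y' => by simp [mul_add, Finset.sum_add_distrib])
    (fun r x y => by simp [Finset.mul_sum, mul_left_comm])

lemma dotForm_apply {F : Type} [Field F] {ι : Type} [Fintype ι] (x y : ι → F) :
    dotForm F ι x y = ∑ i, x i * y i := rfl

lemma dotForm_refl {F : Type} [Field F] {ι : Type} [Fintype ι] :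
    (dotForm F ι).IsRefl := by
  intro x y h
  rw [dotForm_apply] at h ⊢
  rw [← h]
  exact Finset.sum_congr rfl fun i _ => mul_comm _ _

lemma dotForm_nondeg {F : Type} [Field F] {ι : Type} [Fintype ι] [DecidableEq ι] :
    (dotForm F ι).Nondegenerate := by
  refine (LinearMap.IsRefl.nondegenerate_iff_separatingLeft
    (dotForm_refl : LinearMap.IsRefl (dotForm F ι))).mpr ?_
  intro x hx
  funext i
  have := hx (Pi.single i 1)
  rw [dotForm_apply] at this
  simpa [Pi.single_apply, mul_ite, Finset.sum_ite_eq'] using this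

lemma dualCode_eq_orthogonal {F : Type} [Field F] {ι : Type} [Fintype ι]
    (C : Submodule F (ι → F)) : dualCode C = (dotForm F ι).orthogonal C := rfl

lemma dualCode_dualCode {F : Type} [Field F] {ι : Type} [Fintype ι] [DecidableEq ι]
    (C : Submodule F (ι → F)) : dualCode (dualCode C) = C := by
  rw [dualCode_eq_orthogonal, dualCode_eq_orthogonal]
  exact LinearMap.BilinForm.orthogonal_orthogonal dotForm_nondeg dotForm_refl C

lemma sympKey {F : Type} [Field F] {n : ℕ} (v w : Fin n ⊕ Fin n → F) :
    dotProduct (Matrix.vecMul v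
        (Matrix.fromBlocks 0 (-1) 1 0 : Matrix (Fin n ⊕ Fin n) (Fin n ⊕ Fin n) F)) w
      = ∑ i, v (Sum.inr i) * w (Sum.inl i) - ∑ i, v (Sum.inl i) * w (Sum.inr i) := by
  simp [dotProduct, Matrix.vecMul, Fintype.sum_sum_type, Matrix.one_apply,
    Finset.sum_ite_eq, mul_comm, sub_eq_add_neg, Finset.sum_neg_distrib]

/-- Let `S'` be a weakly self-dual `[n, K]` code with parity-check matrix
`H` (rows a basis of `S'^⊥`), and let `V` be the row span of `diag(H, H)`. Then the
symplectic dual `V^{⊥_J} = {w : v J wᵀ = 0 for all v ∈ V}` (with `J = [[0, -I], [I, 0]]`)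
equals the Cartesian product code `S' × S'`. -/
theorem sympDual_rowSpan_diag_parityCheck {F : Type} [Field F] {n K : ℕ}
    (S' : Submodule F (Fin n → F)) (hwsd : dualCode S' ≤ S')
    (H : Matrix (Fin (n - K)) (Fin n) F)
    (hHli : LinearIndependent F H)
    (hHspan : Submodule.span F (Set.range H) = dualCode S') :
    ∀ w : Fin n ⊕ Fin n → F,
      (∀ v ∈ Submodule.span F (Set.range (Matrix.fromBlocks H 0 0 H)),
          dotProduct
            (Matrix.vecMul v
              (Matrix.fromBlocks 0 (-1) 1 0 : Matrix (Fin n ⊕ Fin n) (Fin n ⊕ Fin n) F))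
            w = 0) ↔
        w ∈ cartProd S' := by
  intro w
  constructor
  · intro h
    have key : ∀ i : Fin (n - K),
        (∑ j, H i j * w (Sum.inr j) = 0) ∧ (∑ j, H i j * w (Sum.inl j) = 0) := by
      intro i
      constructor
      · have h1 := h _ (Submodule.subset_span ⟨Sum.inl i, rfl⟩)
        rw [sympKey] at h1
        simpa [Matrix.fromBlocks] using h1
      · have h2 := h _ (Submodule.subset_span ⟨Sum.inr i, rfl⟩)
        rw [sympKey] at h2
        simpa [Matrix.fromBlocks] using h2
    have hmem : ∀ x : Fin n → F, (∀ i, ∑ j, H i j * x j = 0) → x ∈ S' := by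
      intro x hx
      have : x ∈ dualCode (Submodule.span F (Set.range H)) := by
        intro c hc
        induction hc using Submodule.span_induction with
        | mem c hc => obtain ⟨i, rfl⟩ := hc; exact hx i
        | zero => simp
        | add a b _ _ iha ihb =>
          simp only [Pi.add_apply, add_mul, Finset.sum_add_distrib, iha, ihb, add_zero]
        | smul r a _ iha =>
          simp only [Pi.smul_apply, smul_eq_mul, mul_assoc, ← Finset.mul_sum, iha, mul_zero]
      rwa [hHspan, dualCode_dualCode] at this
    exact ⟨hmem _ fun i => (key i).2, hmem _ fun i => (key i).1⟩
  · intro hw v hv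
    rw [sympKey]
    induction hv using Submodule.span_induction with
    | mem v hv =>
      obtain ⟨k, rfl⟩ := hv
      have hrow : ∀ i : Fin (n - K), H i ∈ dualCode S' := by
        intro i
        rw [← hHspan]
        exact Submodule.subset_span ⟨i, rfl⟩
      cases k with
      | inl i =>
        have := hrow i _ hw.2
        simp only [mul_comm] at this
        simpa [Matrix.fromBlocks] using this
      | inr i =>
        have := hrow i _ hw.1
        simp only [mul_comm] at this
        simpa [Matrix.fromBlocks] using this
    | zero => simp
    | add a b _ _ iha ihb =>
      simp only [Pi.add_apply, add_mul, Finset.sum_add_distrib]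
      rw [sub_eq_zero] at iha ihb ⊢
      rw [iha, ihb]
    | smul r a _ iha =>
      simp only [Pi.smul_apply, smul_eq_mul, mul_assoc, ← Finset.mul_sum, ← mul_sub, iha,
        mul_zero]
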